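/- arXiv:1601.05241 — 2 statements merged into one kernel-verified Lean document; each statement's English description precedes it below -/
import Mathlib

section
/- Let ρ̄ be a probability density on the torus 𝕋^d with ρ̄ ∈ L², let wⁿ(x) = n^β w¹(n^{β/d} x) be a rescaled bounded probability density with β ∈ [0,1], and let X¹,…,Xⁿ be i.i.d. random points with law ρ̄(x)dx. Then for the empirical measure μⁿ = (1/n)∑ᵢ δ_{Xᵢ}, one has E[∫ (μⁿ * wⁿ)²(x) dx] ≤ ‖w¹‖_∞ + ∫ ρ̄²(x) dx. -/
open MeasureTheory ProbabilityTheory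
open scoped ENNReal

section Aux

lemma jensenCS {α : Type*} [MeasurableSpace α] (μ : Measure α) {R W : α → ℝ≥0∞}
    (hR : Measurable R) (hW : Measurable W) (hW1 : ∫⁻ y, W y ∂μ = 1) :
    (∫⁻ y, R y * W y ∂μ) ^ 2 ≤ ∫⁻ y, R y ^ 2 * W y ∂μ := by
  have hconj : Real.HolderConjugate 2 2 := Real.HolderConjugate.two_two
  have hhalf : ∀ x : ℝ≥0∞, (x ^ (1/2:ℝ)) ^ (2:ℝ) = x := by
    intro x
    rw [← ENNReal.rpow_mul]; norm_num
  have hf : Measurable fun y => R y * W y ^ (1/2:ℝ) := hR.mul (hW.pow_const _)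
  have hg : Measurable fun y => W y ^ (1/2:ℝ) := hW.pow_const _
  have h := ENNReal.lintegral_mul_le_Lp_mul_Lq μ hconj hf.aemeasurable hg.aemeasurable
  have hprod : ∀ y, (fun y => R y * W y ^ (1/2:ℝ)) y * (fun y => W y ^ (1/2:ℝ)) y
      = R y * W y := by
    intro y
    have : (W y ^ (1/2:ℝ)) * (W y ^ (1/2:ℝ)) = W y := by
      rw [← ENNReal.rpow_add_of_nonneg _ _ (by norm_num) (by norm_num)]; norm_num
    simp only [mul_assoc, this]
  have hfp : ∀ y, ((fun y => R y * W y ^ (1/2:ℝ)) y) ^ (2:ℝ) = R y ^ 2 * W y := by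
    intro y
    rw [ENNReal.mul_rpow_of_nonneg _ _ (by norm_num : (0:ℝ) ≤ 2), hhalf]
    congr 1
    rw [← ENNReal.rpow_natCast (R y) 2]; norm_num
  have hgp : ∀ y, ((fun y => W y ^ (1/2:ℝ)) y) ^ (2:ℝ) = W y := fun y => hhalf _
  simp only [Pi.mul_apply, hprod, hfp, hgp] at h
  rw [hW1, ENNReal.one_rpow, mul_one] at h
  calc (∫⁻ y, R y * W y ∂μ) ^ 2 = ((∫⁻ y, R y * W y ∂μ)) ^ (2:ℝ) := by
        rw [← ENNReal.rpow_natCast _ 2]; norm_num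
    _ ≤ ((∫⁻ y, R y ^ 2 * W y ∂μ) ^ (1/2:ℝ)) ^ (2:ℝ) :=
        ENNReal.rpow_le_rpow h (by norm_num)
    _ = _ := hhalf _

lemma torus_prob (d : ℕ) :
    IsProbabilityMeasure (volume : Measure (Fin d → AddCircle (1:ℝ))) :=
  ⟨by rw [← Set.pi_univ Set.univ, volume_pi_pi]; simp⟩

lemma torus_sub_left (d : ℕ) (c : Fin d → AddCircle (1:ℝ)) :
    MeasurePreserving (fun x => c - x)
      (volume : Measure (Fin d → AddCircle (1:ℝ))) volume := by
  have h : ∀ i : Fin d, MeasurePreserving (fun t => c i - t)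
      (volume : Measure (AddCircle (1:ℝ))) volume := by
    intro i
    have := (measurePreserving_add_left (volume : Measure (AddCircle (1:ℝ)))
      (c i)).comp (Measure.measurePreserving_neg _)
    simpa [Function.comp_def, sub_eq_add_neg] using this
  have := volume_preserving_pi h
  exact this

lemma torus_sub_right (d : ℕ) (c : Fin d → AddCircle (1:ℝ)) :
    MeasurePreserving (fun x => x - c)
      (volume : Measure (Fin d → AddCircle (1:ℝ))) volume := by
  have h : ∀ i : Fin d, MeasurePreserving (fun t => t - c i)
      (volume : Measure (AddCircle (1:ℝ))) volume := by
    intro i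
    have := measurePreserving_add_left (volume : Measure (AddCircle (1:ℝ))) (-(c i))
    simpa [sub_eq_neg_add] using this
  have := volume_preserving_pi h
  exact this

end Aux

/-- Moment bound for mollified empirical measures of i.i.d. samples on the torus `𝕋^d`:
if `ρ̄ ∈ L²(𝕋^d)` is a probability density, `wⁿ` is a probability density bounded by
`n^β ‖w¹‖_∞` with `β ∈ [0,1]`, and `X¹,…,Xⁿ` are i.i.d. with law `ρ̄ dx`, then
`E[∫ (μⁿ * wⁿ)²(x) dx] ≤ ‖w¹‖_∞ + ∫ ρ̄²`. -/
theorem stmt_3 (d : ℕ) (hd : 0 < d)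
    (Ω : Type*) [MeasurableSpace Ω] (P : Measure Ω) [IsProbabilityMeasure P]
    (n : ℕ) (hn : 0 < n) (β : ℝ) (hβ : β ∈ Set.Icc (0:ℝ) 1)
    (M : ℝ) (hM : 0 ≤ M)
    (wn : (Fin d → AddCircle (1:ℝ)) → ℝ)
    (hwn_meas : Measurable wn) (hwn_nonneg : ∀ x, 0 ≤ wn x)
    (hwn_int : ∫ x, wn x = 1)
    (hwn_bound : ∀ x, wn x ≤ (n : ℝ) ^ β * M)
    (ρ : (Fin d → AddCircle (1:ℝ)) → ℝ)
    (hρ_meas : Measurable ρ) (hρ_nonneg : ∀ x, 0 ≤ ρ x)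
    (hρ_int : ∫ x, ρ x = 1) (hρ_L2 : MemLp ρ 2)
    (X : Fin n → Ω → (Fin d → AddCircle (1:ℝ)))
    (hX_meas : ∀ i, Measurable (X i))
    (hX_indep : iIndepFun X P)
    (hX_law : ∀ i, Measure.map (X i) P
      = volume.withDensity (fun x => ENNReal.ofReal (ρ x))) :
    ∫ ω, (∫ x, ((n : ℝ)⁻¹ * ∑ i, wn (X i ω - x)) ^ 2) ∂P
      ≤ M + ∫ x, (ρ x) ^ 2 := by
  obtain ⟨hβ0, hβ1⟩ := hβ
  haveI := torus_prob d
  set W : (Fin d → AddCircle (1:ℝ)) → ℝ≥0∞ := fun z => ENNReal.ofReal (wn z) with hW_def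
  set R : (Fin d → AddCircle (1:ℝ)) → ℝ≥0∞ := fun y => ENNReal.ofReal (ρ y) with hR_def
  have Wm : Measurable W := ENNReal.measurable_ofReal.comp hwn_meas
  have Rm : Measurable R := ENNReal.measurable_ofReal.comp hρ_meas
  set C : ℝ≥0∞ := ENNReal.ofReal ((n:ℝ)^β * M) with hC_def
  set Q : ℝ≥0∞ := ENNReal.ofReal (∫ x, ρ x ^ 2) with hQ_def
  have hnR : (0:ℝ) < n := Nat.cast_pos.mpr hn
  have hn0 : (n:ℝ≥0∞) ≠ 0 := Nat.cast_ne_zero.mpr hn.ne'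
  have hnt : (n:ℝ≥0∞) ≠ ⊤ := ENNReal.natCast_ne_top n
  have hWle : ∀ z, W z ≤ C := fun z => ENNReal.ofReal_le_ofReal (hwn_bound z)
  have hCne : C ≠ ⊤ := ENNReal.ofReal_ne_top
  have hwn_integrable : Integrable wn :=
    (integrable_const ((n:ℝ)^β * M)).mono' hwn_meas.aestronglyMeasurable
      (ae_of_all _ fun x => by
        rw [Real.norm_eq_abs, abs_of_nonneg (hwn_nonneg x)]; exact hwn_bound x)
  have hW1 : ∫⁻ z, W z = 1 := by
    rw [hW_def, ← ofReal_integral_eq_lintegral_ofReal hwn_integrable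
      (ae_of_all _ hwn_nonneg), hwn_int, ENNReal.ofReal_one]
  have hWx : ∀ y : (Fin d → AddCircle (1:ℝ)), ∫⁻ x, W (y - x) = 1 := fun y => by
    rw [(torus_sub_left d y).lintegral_comp Wm]; exact hW1
  have hWy : ∀ x : (Fin d → AddCircle (1:ℝ)), ∫⁻ y, W (y - x) = 1 := fun x => by
    rw [(torus_sub_right d x).lintegral_comp Wm]; exact hW1
  have hρsq_int : Integrable (fun x => ρ x ^ 2) := hρ_L2.integrable_sq
  have hR2 : ∫⁻ y, R y ^ 2 = Q := by
    rw [hQ_def, ofReal_integral_eq_lintegral_ofReal hρsq_int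
      (ae_of_all _ fun x => sq_nonneg _)]
    refine lintegral_congr fun y => ?_
    rw [hR_def, ENNReal.ofReal_pow (hρ_nonneg y)]
  have hRnet : ∀ y, R y ^ 2 ≠ ⊤ := fun y =>
    ENNReal.pow_ne_top ENNReal.ofReal_ne_top
  -- pushforward identity
  have hmap : ∀ (i : Fin n) (g : (Fin d → AddCircle (1:ℝ)) → ℝ≥0∞), Measurable g →
      ∫⁻ ω, g (X i ω) ∂P = ∫⁻ y, R y * g y := by
    intro i g hg
    rw [← lintegral_map hg (hX_meas i), hX_law i,
      lintegral_withDensity_eq_lintegral_mul _ (by exact Rm) hg]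
    rfl
  -- measurability helpers
  have hWsubm : ∀ x : (Fin d → AddCircle (1:ℝ)), Measurable fun y : (Fin d → AddCircle (1:ℝ)) => W (y - x) := fun x =>
    Wm.comp (measurable_id.sub measurable_const)
  have hWsubm' : ∀ y : (Fin d → AddCircle (1:ℝ)), Measurable fun x : (Fin d → AddCircle (1:ℝ)) => W (y - x) := fun y =>
    Wm.comp (measurable_const.sub measurable_id)
  have hpair : ∀ i j : Fin n,
      Measurable fun p : Ω × (Fin d → AddCircle (1:ℝ)) => W (X i p.1 - p.2) * W (X j p.1 - p.2) := by
    intro i j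
    exact (Wm.comp (((hX_meas i).comp measurable_fst).sub measurable_snd)).mul
      (Wm.comp (((hX_meas j).comp measurable_fst).sub measurable_snd))
  -- diagonal bound
  have hdiag : ∀ i : Fin n,
      ∫⁻ ω, ∫⁻ x, W (X i ω - x) * W (X i ω - x) ∂volume ∂P ≤ C := by
    intro i
    have h1 : ∀ ω, ∫⁻ x, W (X i ω - x) * W (X i ω - x) ∂volume ≤ C := by
      intro ω
      calc ∫⁻ x, W (X i ω - x) * W (X i ω - x) ∂volume
          ≤ ∫⁻ x, C * W (X i ω - x) ∂volume :=
            lintegral_mono fun x => mul_le_mul_left (hWle _) _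
        _ = C * ∫⁻ x, W (X i ω - x) ∂volume := lintegral_const_mul' _ _ hCne
        _ = C := by rw [hWx (X i ω), mul_one]
    calc ∫⁻ ω, ∫⁻ x, W (X i ω - x) * W (X i ω - x) ∂volume ∂P
        ≤ ∫⁻ _, C ∂P := lintegral_mono h1
      _ = C := by simp
  -- off-diagonal bound
  have hoff : ∀ i j : Fin n, i ≠ j →
      ∫⁻ ω, ∫⁻ x, W (X i ω - x) * W (X j ω - x) ∂volume ∂P ≤ Q := by
    intro i j hij
    rw [lintegral_lintegral_swap (hpair i j).aemeasurable]
    have h1 : ∀ x : (Fin d → AddCircle (1:ℝ)), ∫⁻ ω, W (X i ω - x) * W (X j ω - x) ∂P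
        = (∫⁻ y, R y * W (y - x)) ^ 2 := by
      intro x
      have hind : IndepFun (fun ω => W (X i ω - x)) (fun ω => W (X j ω - x)) P :=
        (hX_indep.indepFun hij).comp (hWsubm x) (hWsubm x)
      have hmi : Measurable fun ω => W (X i ω - x) := (hWsubm x).comp (hX_meas i)
      have hmj : Measurable fun ω => W (X j ω - x) := (hWsubm x).comp (hX_meas j)
      rw [lintegral_mul_eq_lintegral_mul_lintegral_of_indepFun''
        hmi.aemeasurable hmj.aemeasurable hind]
      rw [hmap i _ (hWsubm x), hmap j _ (hWsubm x), sq]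
    calc ∫⁻ x, ∫⁻ ω, W (X i ω - x) * W (X j ω - x) ∂P ∂volume
        = ∫⁻ x, (∫⁻ y, R y * W (y - x)) ^ 2 ∂volume := lintegral_congr h1
      _ ≤ ∫⁻ x, ∫⁻ y, R y ^ 2 * W (y - x) ∂volume ∂volume :=
          lintegral_mono fun x => jensenCS volume Rm (hWsubm x) (hWy x)
      _ = ∫⁻ y, ∫⁻ x, R y ^ 2 * W (y - x) ∂volume ∂volume := by
          refine lintegral_lintegral_swap ?_
          exact ((Rm.comp measurable_snd).pow_const 2).mul
            (Wm.comp (measurable_snd.sub measurable_fst)) |>.aemeasurable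
      _ = ∫⁻ y, R y ^ 2 ∂volume := by
          refine lintegral_congr fun y => ?_
          rw [lintegral_const_mul' _ _ (hRnet y), hWx y, mul_one]
      _ = Q := hR2
  -- key ennreal bound
  have key : ∫⁻ ω, ∫⁻ x, ((n:ℝ≥0∞)⁻¹ * ∑ i, W (X i ω - x)) ^ 2 ∂volume ∂P
      ≤ ENNReal.ofReal (M + ∫ x, ρ x ^ 2) := by
    have expand : ∀ (ω : Ω) (x : (Fin d → AddCircle (1:ℝ))), ((n:ℝ≥0∞)⁻¹ * ∑ i, W (X i ω - x)) ^ 2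
        = ((n:ℝ≥0∞)⁻¹) ^ 2 * ∑ i, ∑ j, W (X i ω - x) * W (X j ω - x) := by
      intro ω x
      rw [mul_pow, sq (∑ i, W (X i ω - x)), Finset.sum_mul_sum]
    have hinvne : ((n:ℝ≥0∞)⁻¹) ^ 2 ≠ ⊤ :=
      ENNReal.pow_ne_top (ENNReal.inv_ne_top.mpr hn0)
    simp only [expand]
    have step1 : ∫⁻ ω, ∫⁻ x,
        ((n:ℝ≥0∞)⁻¹) ^ 2 * ∑ i, ∑ j, W (X i ω - x) * W (X j ω - x) ∂volume ∂P
        = ((n:ℝ≥0∞)⁻¹) ^ 2 * ∑ i, ∑ j,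
            ∫⁻ ω, ∫⁻ x, W (X i ω - x) * W (X j ω - x) ∂volume ∂P := by
      calc ∫⁻ ω, ∫⁻ x, ((n:ℝ≥0∞)⁻¹) ^ 2 *
              ∑ i, ∑ j, W (X i ω - x) * W (X j ω - x) ∂volume ∂P
          = ∫⁻ ω, ((n:ℝ≥0∞)⁻¹) ^ 2 *
              ∫⁻ x, ∑ i, ∑ j, W (X i ω - x) * W (X j ω - x) ∂volume ∂P := by
            refine lintegral_congr fun ω => lintegral_const_mul' _ _ hinvne
        _ = ((n:ℝ≥0∞)⁻¹) ^ 2 * ∫⁻ ω,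
              ∫⁻ x, ∑ i, ∑ j, W (X i ω - x) * W (X j ω - x) ∂volume ∂P :=
            lintegral_const_mul' _ _ hinvne
        _ = ((n:ℝ≥0∞)⁻¹) ^ 2 * ∑ i, ∑ j,
              ∫⁻ ω, ∫⁻ x, W (X i ω - x) * W (X j ω - x) ∂volume ∂P := by
            congr 1
            calc ∫⁻ ω, ∫⁻ x, ∑ i, ∑ j, W (X i ω - x) * W (X j ω - x) ∂volume ∂P
                = ∫⁻ ω, ∑ i, ∑ j,
                    ∫⁻ x, W (X i ω - x) * W (X j ω - x) ∂volume ∂P := by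
                  refine lintegral_congr fun ω => ?_
                  rw [lintegral_finset_sum (f := fun i x => ∑ j, W (X i ω - x) * W (X j ω - x)) _ fun i _ =>
                    Finset.measurable_sum _ fun j _ =>
                      ((hWsubm' (X i ω))).mul (hWsubm' (X j ω))]
                  exact Finset.sum_congr rfl fun i _ =>
                    lintegral_finset_sum (f := fun j x => W (X i ω - x) * W (X j ω - x)) _ fun j _ =>
                      ((hWsubm' (X i ω))).mul (hWsubm' (X j ω))
              _ = ∑ i, ∑ j, ∫⁻ ω, ∫⁻ x,
                    W (X i ω - x) * W (X j ω - x) ∂volume ∂P := by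
                  rw [lintegral_finset_sum _ fun i _ =>
                    Finset.measurable_sum _ fun j _ =>
                      Measurable.lintegral_prod_right (show Measurable (Function.uncurry fun ω x => W (X i ω - x) * W (X j ω - x)) from hpair i j)]
                  exact Finset.sum_congr rfl fun i _ =>
                    lintegral_finset_sum _ fun j _ => Measurable.lintegral_prod_right (show Measurable (Function.uncurry fun ω x => W (X i ω - x) * W (X j ω - x)) from hpair i j)
    rw [step1]
    have hbound : ∑ i : Fin n, ∑ j : Fin n,
        ∫⁻ ω, ∫⁻ x, W (X i ω - x) * W (X j ω - x) ∂volume ∂P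
        ≤ (n:ℝ≥0∞) * C + ((n:ℝ≥0∞) * (n:ℝ≥0∞)) * Q := by
      calc ∑ i : Fin n, ∑ j : Fin n,
            ∫⁻ ω, ∫⁻ x, W (X i ω - x) * W (X j ω - x) ∂volume ∂P
          ≤ ∑ i : Fin n, ∑ j : Fin n, ((if i = j then C else 0) + Q) := by
            refine Finset.sum_le_sum fun i _ => Finset.sum_le_sum fun j _ => ?_
            by_cases h : i = j
            · subst h
              simp only [if_pos rfl]
              exact le_trans (hdiag i) le_self_add
            · simp only [if_neg h, zero_add]
              exact hoff i j h
        _ = (n:ℝ≥0∞) * C + ((n:ℝ≥0∞) * (n:ℝ≥0∞)) * Q := by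
            simp only [Finset.sum_add_distrib, Finset.sum_ite_eq,
              Finset.mem_univ, if_pos, Finset.sum_const, Finset.card_univ,
              Fintype.card_fin, nsmul_eq_mul]
            ring
    calc ((n:ℝ≥0∞)⁻¹) ^ 2 * ∑ i, ∑ j,
          ∫⁻ ω, ∫⁻ x, W (X i ω - x) * W (X j ω - x) ∂volume ∂P
        ≤ ((n:ℝ≥0∞)⁻¹) ^ 2 * ((n:ℝ≥0∞) * C + ((n:ℝ≥0∞) * (n:ℝ≥0∞)) * Q) :=
          mul_le_mul_right hbound _
      _ = (n:ℝ≥0∞)⁻¹ * C + Q := by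
          rw [mul_add]
          congr 1
          · rw [sq, mul_assoc, ← mul_assoc (n:ℝ≥0∞)⁻¹ (n:ℝ≥0∞) C,
              ENNReal.inv_mul_cancel hn0 hnt, one_mul]
          · rw [sq]
            calc (n:ℝ≥0∞)⁻¹ * (n:ℝ≥0∞)⁻¹ * ((n:ℝ≥0∞) * (n:ℝ≥0∞) * Q)
                = ((n:ℝ≥0∞)⁻¹ * (n:ℝ≥0∞)) * ((n:ℝ≥0∞)⁻¹ * (n:ℝ≥0∞)) * Q := by
                  ring
              _ = Q := by rw [ENNReal.inv_mul_cancel hn0 hnt, one_mul, one_mul]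
      _ ≤ ENNReal.ofReal M + Q := by
          refine add_le_add_left ?_ Q
          have h1 : (n:ℝ≥0∞)⁻¹ = ENNReal.ofReal ((n:ℝ)⁻¹) := by
            rw [ENNReal.ofReal_inv_of_pos hnR, ENNReal.ofReal_natCast]
          rw [h1, hC_def, ← ENNReal.ofReal_mul (by positivity)]
          refine ENNReal.ofReal_le_ofReal ?_
          have hb : (n:ℝ)^β ≤ (n:ℝ) := by
            have := Real.rpow_le_rpow_of_exponent_le
              (by exact_mod_cast hn : (1:ℝ) ≤ (n:ℝ)) hβ1
            rwa [Real.rpow_one] at this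
          rw [← mul_assoc]
          have h2 : (n:ℝ)⁻¹ * (n:ℝ)^β ≤ 1 := by
            rw [inv_mul_le_iff₀ hnR, mul_one]; exact hb
          calc (n:ℝ)⁻¹ * (n:ℝ)^β * M ≤ 1 * M :=
              mul_le_mul_of_nonneg_right h2 hM
            _ = M := one_mul M
      _ = ENNReal.ofReal (M + ∫ x, ρ x ^ 2) := by
          rw [hQ_def, ← ENNReal.ofReal_add hM (integral_nonneg fun x => sq_nonneg _)]
  -- from ennreal to real
  set Φ : Ω → (Fin d → AddCircle (1:ℝ)) → ℝ≥0∞ := fun ω x => ((n:ℝ≥0∞)⁻¹ * ∑ i, W (X i ω - x)) ^ 2 with hΦ_def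
  have hΦm : Measurable fun p : Ω × (Fin d → AddCircle (1:ℝ)) => Φ p.1 p.2 := by
    refine Measurable.pow_const ?_ 2
    exact measurable_const.mul (Finset.measurable_sum _ fun i _ =>
      Wm.comp (((hX_meas i).comp measurable_fst).sub measurable_snd))
  have hΦb : ∀ ω x, Φ ω x ≤ C ^ 2 := by
    intro ω x
    have hsum : ∑ i : Fin n, W (X i ω - x) ≤ (n:ℝ≥0∞) * C := by
      calc ∑ i : Fin n, W (X i ω - x) ≤ ∑ _i : Fin n, C :=
          Finset.sum_le_sum fun i _ => hWle _
        _ = (n:ℝ≥0∞) * C := by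
          rw [Finset.sum_const, Finset.card_univ, Fintype.card_fin, nsmul_eq_mul]
    have : (n:ℝ≥0∞)⁻¹ * ∑ i, W (X i ω - x) ≤ C := by
      calc (n:ℝ≥0∞)⁻¹ * ∑ i, W (X i ω - x) ≤ (n:ℝ≥0∞)⁻¹ * ((n:ℝ≥0∞) * C) :=
          mul_le_mul_right hsum _
        _ = C := by rw [← mul_assoc, ENNReal.inv_mul_cancel hn0 hnt, one_mul]
    exact pow_le_pow_left₀ zero_le this 2
  have hfin : ∀ ω, ∫⁻ x, Φ ω x ≠ ⊤ := by
    intro ω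
    have : ∫⁻ x, Φ ω x ≤ C ^ 2 := by
      calc ∫⁻ x, Φ ω x ≤ ∫⁻ _x : (Fin d → AddCircle (1:ℝ)), C ^ 2 := lintegral_mono (hΦb ω)
        _ = C ^ 2 := by simp
    exact ne_top_of_le_ne_top (ENNReal.pow_ne_top hCne) this
  have hinner : ∀ ω, ∫ x, ((n:ℝ)⁻¹ * ∑ i, wn (X i ω - x)) ^ 2
      = (∫⁻ x, Φ ω x).toReal := by
    intro ω
    have hm : Measurable fun x : (Fin d → AddCircle (1:ℝ)) => ((n:ℝ)⁻¹ * ∑ i, wn (X i ω - x)) ^ 2 := by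
      refine Measurable.pow_const ?_ 2
      exact measurable_const.mul (Finset.measurable_sum _ fun i _ =>
        hwn_meas.comp (measurable_const.sub measurable_id))
    rw [integral_eq_lintegral_of_nonneg_ae (ae_of_all _ fun x => sq_nonneg _)
      hm.aestronglyMeasurable]
    congr 1
    refine lintegral_congr fun x => ?_
    rw [hΦ_def]
    have hnn : 0 ≤ (n:ℝ)⁻¹ * ∑ i, wn (X i ω - x) :=
      mul_nonneg (inv_nonneg.mpr hnR.le) (Finset.sum_nonneg fun i _ => hwn_nonneg _)
    rw [ENNReal.ofReal_pow hnn,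
      ENNReal.ofReal_mul (inv_nonneg.mpr hnR.le),
      ENNReal.ofReal_sum_of_nonneg (fun i _ => hwn_nonneg _),
      ENNReal.ofReal_inv_of_pos hnR, ENNReal.ofReal_natCast]
  have houterm : Measurable fun ω => (∫⁻ x, Φ ω x).toReal :=
    (Measurable.lintegral_prod_right
      (show Measurable (Function.uncurry Φ) from hΦm)).ennreal_toReal
  calc ∫ ω, (∫ x, ((n:ℝ)⁻¹ * ∑ i, wn (X i ω - x)) ^ 2) ∂P
      = ∫ ω, (∫⁻ x, Φ ω x).toReal ∂P := by
        exact integral_congr_ae (ae_of_all _ hinner)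
    _ = (∫⁻ ω, ∫⁻ x, Φ ω x ∂volume ∂P).toReal := by
        rw [integral_eq_lintegral_of_nonneg_ae
          (ae_of_all _ fun ω => ENNReal.toReal_nonneg) houterm.aestronglyMeasurable]
        congr 1
        exact lintegral_congr fun ω => ENNReal.ofReal_toReal (hfin ω)
    _ ≤ M + ∫ x, ρ x ^ 2 :=
        ENNReal.toReal_le_of_le_ofReal
          (add_nonneg hM (integral_nonneg fun x => sq_nonneg _)) key
end

section
/- Let X, Y be Polish metric spaces, (fⁿ) random variables with values in X converging in law to f, and (Fⁿ) maps X → Y pointwise converging to F with sup_n Lip(Fⁿ) < ∞. Then Fⁿ∘fⁿ converges in law to F∘f. -/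
open MeasureTheory

/-- If `fⁿ` are `X`-valued random variables converging in law to `f` (Polish spaces),
and `Fⁿ : X → Y` are uniformly Lipschitz maps converging pointwise to `F`, then
`Fⁿ∘fⁿ` converges in law to `F∘f`. Convergence in law is expressed by testing against
bounded continuous functions. -/
theorem stmt_12 (X Y : Type*)
    [MetricSpace X] [CompleteSpace X] [TopologicalSpace.SeparableSpace X]
    [MeasurableSpace X] [BorelSpace X]
    [MetricSpace Y] [CompleteSpace Y] [TopologicalSpace.SeparableSpace Y]
    [MeasurableSpace Y] [BorelSpace Y]
    (Ω : Type*) [MeasurableSpace Ω] (P : Measure Ω) [IsProbabilityMeasure P]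
    (f : ℕ → Ω → X) (f₀ : Ω → X)
    (hf_meas : ∀ n, Measurable (f n)) (hf₀_meas : Measurable f₀)
    (hf_law : ∀ ψ : BoundedContinuousFunction X ℝ,
      Filter.Tendsto (fun n => ∫ ω, ψ (f n ω) ∂P) Filter.atTop (nhds (∫ ω, ψ (f₀ ω) ∂P)))
    (F : ℕ → X → Y) (F₀ : X → Y) (L : NNReal)
    (hL : ∀ n, LipschitzWith L (F n))
    (hF_conv : ∀ x, Filter.Tendsto (fun n => F n x) Filter.atTop (nhds (F₀ x))) :
    ∀ φ : BoundedContinuousFunction Y ℝ,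
      Filter.Tendsto (fun n => ∫ ω, φ (F n (f n ω)) ∂P) Filter.atTop
        (nhds (∫ ω, φ (F₀ (f₀ ω)) ∂P)) := by
  classical
  -- The pointwise limit of `L`-Lipschitz maps is `L`-Lipschitz.
  have hF₀_lip : LipschitzWith L F₀ := by
    apply LipschitzWith.of_dist_le_mul
    intro x y
    refine le_of_tendsto ((hF_conv x).dist (hF_conv y)) ?_
    exact Filter.Eventually.of_forall fun n => (hL n).dist_le_mul x y
  have hF₀_cont : Continuous F₀ := hF₀_lip.continuous
  have hFn_meas : ∀ n, Measurable (F n) := fun n => (hL n).continuous.measurable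
  have hcomp_meas : ∀ n, Measurable fun ω => F n (f n ω) :=
    fun n => (hFn_meas n).comp (hf_meas n)
  have hcomp₀_meas : Measurable fun ω => F₀ (f₀ ω) := hF₀_cont.measurable.comp hf₀_meas
  -- Laws as probability measures
  let μ : ℕ → ProbabilityMeasure X :=
    fun n => ⟨P.map (f n), Measure.isProbabilityMeasure_map (hf_meas n).aemeasurable⟩
  let μ₀ : ProbabilityMeasure X := ⟨P.map f₀, Measure.isProbabilityMeasure_map hf₀_meas.aemeasurable⟩
  let ν : ℕ → ProbabilityMeasure Y :=
    fun n => ⟨P.map (fun ω => F n (f n ω)), Measure.isProbabilityMeasure_map (hcomp_meas n).aemeasurable⟩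
  let ν₀ : ProbabilityMeasure Y :=
    ⟨P.map (fun ω => F₀ (f₀ ω)), Measure.isProbabilityMeasure_map hcomp₀_meas.aemeasurable⟩
  -- weak convergence of the laws of `f n`
  have hμ_tendsto : Filter.Tendsto μ Filter.atTop (nhds μ₀) := by
    rw [ProbabilityMeasure.tendsto_iff_forall_integral_tendsto]
    intro ψ
    have h1 : ∀ n, ∫ x, ψ x ∂(μ n : Measure X) = ∫ ω, ψ (f n ω) ∂P := fun n =>
      integral_map (hf_meas n).aemeasurable ψ.continuous.measurable.aestronglyMeasurable
    have h0 : ∫ x, ψ x ∂(μ₀ : Measure X) = ∫ ω, ψ (f₀ ω) ∂P :=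
      integral_map hf₀_meas.aemeasurable ψ.continuous.measurable.aestronglyMeasurable
    simp only [h1, h0]
    exact hf_law ψ
  -- weak convergence of the laws of `F n ∘ f n`
  have hν : Filter.Tendsto ν Filter.atTop (nhds ν₀) := by
    apply MeasureTheory.tendsto_of_forall_isOpen_le_liminf
    intro G hG
    -- the key inequality, in ℝ≥0∞
    have key : (ν₀ : Measure Y) G ≤
        Filter.atTop.liminf (fun n => (ν n : Measure Y) G) := by
      have hmap : ∀ n, (ν n : Measure Y) G = (μ n : Measure X) (F n ⁻¹' G) := by
        intro n
        show (P.map fun ω => F n (f n ω)) G = (P.map (f n)) (F n ⁻¹' G)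
        rw [Measure.map_apply (hcomp_meas n) hG.measurableSet,
          Measure.map_apply (hf_meas n) ((hFn_meas n) hG.measurableSet)]
        rfl
      have hmap₀ : (ν₀ : Measure Y) G = (μ₀ : Measure X) (F₀ ⁻¹' G) := by
        show (P.map fun ω => F₀ (f₀ ω)) G = (P.map f₀) (F₀ ⁻¹' G)
        rw [Measure.map_apply hcomp₀_meas hG.measurableSet,
          Measure.map_apply hf₀_meas (hF₀_cont.measurable hG.measurableSet)]
        rfl
      have hliminf_eq : Filter.atTop.liminf (fun n => (ν n : Measure Y) G) =
          Filter.atTop.liminf (fun n => (μ n : Measure X) (F n ⁻¹' G)) := by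
        congr 1
        funext n
        exact hmap n
      rw [hmap₀, hliminf_eq]
      by_cases hGc : Gᶜ = ∅
      · -- G = univ : trivial
        have hGu : G = Set.univ := by
          rw [← Set.compl_empty, ← hGc, compl_compl]
        simp only [hGu, Set.preimage_univ, measure_univ]
        simp [Filter.liminf_const]
      · have hne : (Gᶜ : Set Y).Nonempty := Set.nonempty_iff_ne_empty.2 hGc
        -- distance functions
        set d : ℕ → X → ℝ := fun k x => dist (F k x) (F₀ x) with hd_def
        have hd_tendsto : ∀ x, Filter.Tendsto (fun k => d k x) Filter.atTop (nhds 0) := by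
          intro x
          simpa using (hF_conv x).dist (tendsto_const_nhds (x := F₀ x))
        have hbdd : ∀ n x, BddAbove (Set.range fun k => d (k + n) x) := fun n x =>
          (((hd_tendsto x).comp (Filter.tendsto_add_atTop_nat n))).bddAbove_range
        set H : ℕ → X → ℝ := fun n x => ⨆ k, d (k + n) x with hH_def
        have hle_H : ∀ n k x, n ≤ k → d k x ≤ H n x := by
          intro n k x hk
          have hkeq : d k x = (fun j => d (j + n) x) (k - n) := by
            simp only
            congr 1
            omega
          rw [hkeq]
          exact le_ciSup (hbdd n x) _
        have hH_anti : ∀ x, ∀ {n n' : ℕ}, n ≤ n' → H n' x ≤ H n x := by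
          intro x n n' h
          exact ciSup_le fun k => hle_H n (k + n') x (by omega)
        have hH_lt : ∀ x, ∀ ε : ℝ, 0 < ε → ∃ n, H n x < ε := by
          intro x ε hε
          obtain ⟨N, hN⟩ := Metric.tendsto_atTop.mp (hd_tendsto x) (ε / 2) (by positivity)
          have hle : H N x ≤ ε / 2 := by
            refine ciSup_le fun k => ?_
            have h2 := hN (k + N) (Nat.le_add_left N k)
            rw [Real.dist_0_eq_abs] at h2
            exact (le_abs_self _).trans h2.le
          exact ⟨N, lt_of_le_of_lt hle (by linarith)⟩
        have hH_lip : ∀ n, LipschitzWith (2 * L) (H n) := by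
          intro n
          apply LipschitzWith.of_dist_le_mul
          have key2 : ∀ u v : X, H n u ≤ H n v + (2 * L : NNReal) * dist u v := by
            intro u v
            refine ciSup_le fun k => ?_
            have t1 := (hL (k + n)).dist_le_mul u v
            have t2 := hF₀_lip.dist_le_mul v u
            have tri : dist (F (k + n) u) (F₀ u) ≤
                dist (F (k + n) u) (F (k + n) v) + dist (F (k + n) v) (F₀ v)
                  + dist (F₀ v) (F₀ u) := dist_triangle4 _ _ _ _
            have hdv : d (k + n) v ≤ H n v := hle_H n (k + n) v (by omega)
            rw [dist_comm v u] at t2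
            have hfin : dist (F (k + n) u) (F₀ u) ≤ H n v + 2 * (L : ℝ) * dist u v := by
              calc dist (F (k + n) u) (F₀ u)
                  ≤ dist (F (k + n) u) (F (k + n) v) + dist (F (k + n) v) (F₀ v)
                    + dist (F₀ v) (F₀ u) := tri
                _ ≤ (L : ℝ) * dist u v + H n v + (L : ℝ) * dist u v :=
                    add_le_add (add_le_add t1 hdv) t2
                _ = H n v + 2 * (L : ℝ) * dist u v := by ring
            simp only [hd_def] at hdv ⊢
            push_cast
            exact hfin
          intro x y
          rw [Real.dist_eq, abs_sub_le_iff]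
          constructor
          · have := key2 x y
            linarith
          · have := key2 y x
            rw [dist_comm y x] at this
            linarith
        -- open sets
        set W : ℕ → Set X := fun m => {x | 1 / (m + 1 : ℝ) < Metric.infDist (F₀ x) Gᶜ}
          with hW_def
        have hW_open : ∀ m, IsOpen (W m) :=
          fun m => isOpen_lt continuous_const ((Metric.continuous_infDist_pt _).comp hF₀_cont)
        have hW_mono : Monotone W := by
          intro m m' h x hx
          simp only [hW_def, Set.mem_setOf_eq] at hx ⊢
          have : (1 : ℝ) / (m' + 1) ≤ 1 / (m + 1) := by
            apply one_div_le_one_div_of_le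
            · positivity
            · exact_mod_cast Nat.add_le_add_right h 1
          linarith
        have hW_sub : ∀ m, W m ⊆ F₀ ⁻¹' G := by
          intro m x hx
          simp only [hW_def, Set.mem_setOf_eq] at hx
          by_contra hxG
          have hmem : F₀ x ∈ Gᶜ := hxG
          have h0 : Metric.infDist (F₀ x) Gᶜ = 0 := Metric.infDist_zero_of_mem hmem
          rw [h0] at hx
          have : (0 : ℝ) < 1 / (m + 1) := by positivity
          linarith
        have hW_union : F₀ ⁻¹' G ⊆ ⋃ m, W m := by
          intro x hx
          have hxc : F₀ x ∉ (Gᶜ : Set Y) := by simpa using hx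
          have hpos : 0 < Metric.infDist (F₀ x) Gᶜ :=
            (hG.isClosed_compl.notMem_iff_infDist_pos hne).1 hxc
          obtain ⟨m, hm⟩ := exists_nat_one_div_lt hpos
          exact Set.mem_iUnion.2 ⟨m, hm⟩
        set B : ℕ → ℕ → Set X := fun m n => W m ∩ {x | H n x < 1 / (m + 1 : ℝ)} with hB_def
        have hB_open : ∀ m n, IsOpen (B m n) := fun m n =>
          (hW_open m).inter (isOpen_lt (hH_lip n).continuous continuous_const)
        have hB_mono : ∀ m, Monotone (B m) := by
          intro m n n' h
          refine Set.inter_subset_inter_right _ fun x hx => ?_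
          simp only [Set.mem_setOf_eq] at hx ⊢
          exact lt_of_le_of_lt (hH_anti x h) hx
        have hB_union : ∀ m, W m = ⋃ n, B m n := by
          intro m
          ext x
          constructor
          · intro hx
            obtain ⟨n, hn⟩ := hH_lt x (1 / (m + 1 : ℝ)) (by positivity)
            exact Set.mem_iUnion.2 ⟨n, hx, hn⟩
          · intro hx
            obtain ⟨n, hn⟩ := Set.mem_iUnion.1 hx
            exact hn.1
        have hB_sub : ∀ m n k, n ≤ k → B m n ⊆ F k ⁻¹' G := by
          intro m n k hk x hx
          obtain ⟨hx1, hx2⟩ := hx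
          simp only [hW_def, Set.mem_setOf_eq] at hx1
          simp only [Set.mem_setOf_eq] at hx2
          by_contra hFk
          have hmem : F k x ∈ (Gᶜ : Set Y) := hFk
          have h1 : Metric.infDist (F₀ x) Gᶜ ≤ dist (F₀ x) (F k x) :=
            Metric.infDist_le_dist_of_mem hmem
          have h2 : dist (F₀ x) (F k x) ≤ H n x := by
            rw [dist_comm]
            exact hle_H n k x hk
          linarith
        -- assemble
        have step : ∀ m n, (μ₀ : Measure X) (B m n) ≤
            Filter.atTop.liminf (fun k => (μ k : Measure X) (F k ⁻¹' G)) := by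
          intro m n
          refine (ProbabilityMeasure.le_liminf_measure_open_of_tendsto hμ_tendsto
            (hB_open m n)).trans ?_
          refine Filter.liminf_le_liminf ?_
          exact Filter.eventually_atTop.2 ⟨n, fun k hk => measure_mono (hB_sub m n k hk)⟩
        calc (μ₀ : Measure X) (F₀ ⁻¹' G) ≤ (μ₀ : Measure X) (⋃ m, W m) :=
              measure_mono hW_union
          _ = ⨆ m, (μ₀ : Measure X) (W m) := Directed.measure_iUnion hW_mono.directed_le
          _ ≤ Filter.atTop.liminf (fun k => (μ k : Measure X) (F k ⁻¹' G)) := by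
              refine iSup_le fun m => ?_
              rw [hB_union m, Directed.measure_iUnion (hB_mono m).directed_le]
              exact iSup_le fun n => step m n
    -- convert the ℝ≥0∞ inequality to the ℝ≥0 statement
    have aux : ((Filter.atTop.liminf fun i => ν i G : NNReal) : ENNReal) =
        Filter.atTop.liminf (fun i => ((ν i G : NNReal) : ENNReal)) := by
      refine Monotone.map_liminf_of_continuousAt (F := Filter.atTop) ENNReal.coe_mono
        (fun i => ν i G) ENNReal.continuous_coe.continuousAt ?_ ?_
      · exact Filter.IsBoundedUnder.isCoboundedUnder_ge ⟨1, by simp⟩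
      · exact ⟨0, by simp⟩
    rw [← ENNReal.coe_le_coe, aux]
    simpa only [ProbabilityMeasure.ennreal_coeFn_eq_coeFn_toMeasure] using key
  -- conclude
  intro φ
  have hT := ProbabilityMeasure.tendsto_iff_forall_integral_tendsto.mp hν φ
  have e1 : ∀ n, ∫ y, φ y ∂(ν n : Measure Y) = ∫ ω, φ (F n (f n ω)) ∂P := fun n =>
    integral_map (hcomp_meas n).aemeasurable φ.continuous.measurable.aestronglyMeasurable
  have e0 : ∫ y, φ y ∂(ν₀ : Measure Y) = ∫ ω, φ (F₀ (f₀ ω)) ∂P :=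
    integral_map hcomp₀_meas.aemeasurable φ.continuous.measurable.aestronglyMeasurable
  simpa only [e1, e0] using hT
end
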